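/- Let A be a unital algebra over ℂ, M a unital A-bimodule, and m, n positive integers with m ≠ n. Suppose J is a two-sided ideal of A contained in the subalgebra generated by the idempotents of A, and J is a right separating set of M (i.e., J·x = {0} implies x = 0 for x ∈ M). If δ : A → M is an (m,n)-Jordan derivable mapping at zero with δ(1) = 0, then δ = 0. -/
import Mathlib


open MulOpposite

/-- If a two-sided ideal `J` contained in the subring generated by
idempotents is a right separating set of `M`, then every `(m,n)`-Jordan derivable
mapping at zero with `δ 1 = 0` vanishes. -/
theorem mn_jordan_derivable_at_zero_eq_zero_of_right_separating
    {A M : Type*} [Ring A] [Algebra ℂ A]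
    [AddCommGroup M] [Module ℂ M] [Module A M] [Module Aᵐᵒᵖ M]
    [SMulCommClass A Aᵐᵒᵖ M]
    (m n : ℕ) (hm : 0 < m) (hn : 0 < n) (hmn : m ≠ n)
    (δ : A → M) (hadd : ∀ a b : A, δ (a + b) = δ a + δ b)
    (hδ1 : δ 1 = 0)
    (hzero : ∀ X Y : A, X * Y = 0 → Y * X = 0 →
      (m + n) • δ (X * Y + Y * X) =
        (2 * m) • (op Y • δ X) + (2 * m) • (op X • δ Y)
          + (2 * n) • (X • δ Y) + (2 * n) • (Y • δ X))
    (J : TwoSidedIdeal A)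
    (hJsub : (J : Set A) ⊆ (Subring.closure {P : A | P * P = P} : Set A))
    (hsep : ∀ x : M, (∀ S ∈ J, S • x = 0) → x = 0) :
    ∀ a : A, δ a = 0 := by
  -- basic consequences of additivity
  have hδ0 : δ 0 = 0 := by
    have h := hadd 0 0
    rw [add_zero] at h
    exact (left_eq_add.mp h)
  have hneg : ∀ a : A, δ (-a) = - δ a := by
    intro a
    have h := hadd a (-a)
    rw [add_neg_cancel, hδ0] at h
    exact eq_neg_of_add_eq_zero_right h.symm
  -- torsion-freeness via the ℂ-module structure
  have cancelZ : ∀ (k : ℤ), k ≠ 0 → ∀ x : M, k • x = 0 → x = 0 := by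
    intro k hk x hx
    have h2 : ((k : ℂ)) • x = 0 := by rw [Int.cast_smul_eq_zsmul]; exact hx
    rcases smul_eq_zero.mp h2 with h | h
    · exact absurd (by exact_mod_cast h) hk
    · exact h
  have cancel2 : ∀ (p q : ℕ), p ≠ q → ∀ x : M, p • x = q • x → x = 0 := by
    intro p q hpq x hx
    have h : ((p : ℤ) - q) • x = 0 := by
      rw [sub_smul, natCast_zsmul, natCast_zsmul, hx, sub_self]
    refine cancelZ _ ?_ x h
    intro h0
    exact hpq (by exact_mod_cast sub_eq_zero.mp h0)
  have cancelN : ∀ (k : ℕ), k ≠ 0 → ∀ x : M, k • x = 0 → x = 0 := by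
    intro k hk x hx
    exact cancel2 k 0 hk x (by simpa using hx)
  -- Step I : δ vanishes on idempotents
  have idem : ∀ P : A, P * P = P → δ P = 0 := by
    intro P hP
    have h1 : P * (1 - P) = 0 := by rw [mul_sub, mul_one, hP, sub_self]
    have h2 : (1 - P) * P = 0 := by rw [sub_mul, one_mul, hP, sub_self]
    have E := hzero P (1 - P) h1 h2
    rw [h1, h2, add_zero, hδ0, smul_zero] at E
    have hd1P : δ (1 - P) = - δ P := by
      rw [sub_eq_add_neg, hadd, hδ1, hneg, zero_add]
    rw [hd1P] at E
    have hop : op (1 - P) = 1 - op P := by simp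
    rw [hop] at E
    have hPP : ∀ x : M, P • (P • x) = P • x := fun x => by rw [← mul_smul, hP]
    have hoo : ∀ x : M, op P • (op P • x) = op P • x := fun x => by
      rw [← mul_smul, ← op_mul, hP]
    have hcm : ∀ x : M, P • (op P • x) = op P • (P • x) := fun x => smul_comm _ _ _
    have hnP : ∀ (k : ℕ) (x : M), P • (k • x) = k • (P • x) := fun k x =>
      (smul_comm k P x).symm
    have hno : ∀ (k : ℕ) (x : M), op P • (k • x) = k • (op P • x) := fun k x =>
      (smul_comm k (op P) x).symm
    simp only [sub_smul, one_smul, smul_neg, smul_sub] at E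
    have E1 := congrArg (fun x : M => P • x) E
    have E2 := congrArg (fun x : M => op P • x) E
    simp only [smul_add, smul_sub, smul_neg, smul_zero, hnP, hno, hPP, hoo, hcm] at E1 E2
    have E3 := congrArg (fun x : M => op P • x) E1
    simp only [smul_add, smul_sub, smul_neg, smul_zero, hnP, hno, hPP, hoo, hcm] at E3
    generalize hu : δ P = u at E E1 E2 E3 ⊢
    generalize hv0 : P • u = v at E E1 E2 E3
    generalize hw0 : op P • u = w at E E1 E2 E3
    generalize hz0 : op P • v = z at E E1 E2 E3
    have hz : z = 0 := by
      refine cancelN (2*m + 2*n) (by omega) _ ?_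
      first
      | linear_combination (norm := module) E3
      | linear_combination (norm := module) -E3
    rw [hz] at E1 E2
    have hv : v = 0 := by
      refine cancel2 (2*m) (2*n) (by omega) _ ?_
      first
      | linear_combination (norm := module) E1
      | linear_combination (norm := module) -E1
    have hw : w = 0 := by
      refine cancel2 (2*n) (2*m) (by omega) _ ?_
      first
      | linear_combination (norm := module) E2
      | linear_combination (norm := module) -E2
    rw [hv, hw] at E
    refine cancelN (2*m + 2*n) (by omega) _ ?_
    first
    | linear_combination (norm := module) E
    | linear_combination (norm := module) -E
  -- Step II : corner annihilation
  have corner : ∀ P : A, P * P = P → ∀ a : A,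
      P • δ ((1-P) * a * (1-P)) = 0 ∧ op P • δ ((1-P) * a * (1-P)) = 0 := by
    intro P hP a
    have hPQ : P * (1 - P) = 0 := by rw [mul_sub, mul_one, hP, sub_self]
    have hQP : (1 - P) * P = 0 := by rw [sub_mul, one_mul, hP, sub_self]
    have h1 : P * ((1-P) * a * (1-P)) = 0 := by
      rw [← mul_assoc, ← mul_assoc, hPQ, zero_mul, zero_mul]
    have h2 : ((1-P) * a * (1-P)) * P = 0 := by
      rw [mul_assoc, hQP, mul_zero]
    have E := hzero P ((1-P) * a * (1-P)) h1 h2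
    rw [h1, h2, add_zero, hδ0, smul_zero, idem P hP] at E
    have hPP : ∀ x : M, P • (P • x) = P • x := fun x => by rw [← mul_smul, hP]
    have hoo : ∀ x : M, op P • (op P • x) = op P • x := fun x => by
      rw [← mul_smul, ← op_mul, hP]
    have hcm : ∀ x : M, P • (op P • x) = op P • (P • x) := fun x => smul_comm _ _ _
    have hnP : ∀ (k : ℕ) (x : M), P • (k • x) = k • (P • x) := fun k x =>
      (smul_comm k P x).symm
    have hno : ∀ (k : ℕ) (x : M), op P • (k • x) = k • (op P • x) := fun k x =>
      (smul_comm k (op P) x).symm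
    simp only [smul_zero, smul_add, add_zero, zero_add] at E
    have E1 := congrArg (fun x : M => P • x) E
    have E2 := congrArg (fun x : M => op P • x) E
    simp only [smul_add, smul_zero, hnP, hno, hPP, hoo, hcm] at E1 E2
    have E3 := congrArg (fun x : M => op P • x) E1
    simp only [smul_add, smul_zero, hnP, hno, hPP, hoo, hcm] at E3
    generalize hd : δ ((1-P) * a * (1-P)) = d at E E1 E2 E3 ⊢
    generalize hv0 : P • d = v at E E1 E2 E3 ⊢
    generalize hw0 : op P • d = w at E E1 E2 E3 ⊢
    generalize hz0 : op P • v = z at E E1 E2 E3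
    have hz : z = 0 := by
      refine cancelN (2*m + 2*n) (by omega) _ ?_
      first
      | linear_combination (norm := module) E3
      | linear_combination (norm := module) -E3
    rw [hz] at E1 E2
    constructor
    · refine cancelN (2*n) (by omega) _ ?_
      first
      | linear_combination (norm := module) E1
      | linear_combination (norm := module) -E1
    · refine cancelN (2*m) (by omega) _ ?_
      first
      | linear_combination (norm := module) E2
      | linear_combination (norm := module) -E2
  -- Step III : δ vanishes on the off-diagonal Peirce corners
  have offdiag : ∀ P : A, P * P = P → ∀ a : A,
      δ (P * a * (1-P)) = 0 ∧ δ ((1-P) * a * P) = 0 := by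
    intro P hP a
    have hP' : ∀ x : A, P * (P * x) = P * x := fun x => by rw [← mul_assoc, hP]
    constructor
    · have hidem : (P + P * a * (1-P)) * (P + P * a * (1-P)) = P + P * a * (1-P) := by
        simp only [mul_add, add_mul, mul_sub, sub_mul, mul_one, one_mul, mul_assoc, hP, hP']
        abel
      have h0 := idem _ hidem
      rw [hadd, idem P hP, zero_add] at h0
      exact h0
    · have hidem : (P + (1-P) * a * P) * (P + (1-P) * a * P) = P + (1-P) * a * P := by
        simp only [mul_add, add_mul, mul_sub, sub_mul, mul_one, one_mul, mul_assoc, hP, hP']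
        abel
      have h0 := idem _ hidem
      rw [hadd, idem P hP, zero_add] at h0
      exact h0
  -- Step IV : for idempotent P, δ (P*a) = P • δ a and δ (a*P) = δ a • P
  have key : ∀ P : A, P * P = P → ∀ a : A,
      δ (P * a) = P • δ a ∧ δ (a * P) = op P • δ a := by
    intro P hP a
    have hQ : (1-P) * (1-P) = (1-P) := by
      rw [sub_mul, one_mul, mul_sub, mul_one, hP, sub_self, sub_zero]
    have hQ' : 1 - (1 - P) = P := sub_sub_cancel 1 P
    -- δ a = δ (P*a*P) + δ ((1-P)*a*(1-P))
    have hsplit : δ a = δ (P * a * P) + δ ((1-P) * a * (1-P)) := by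
      have ha : a = P * a * P + P * a * (1-P) + ((1-P) * a * P + (1-P) * a * (1-P)) := by
        noncomm_ring
      calc δ a = δ (P * a * P + P * a * (1-P) + ((1-P) * a * P + (1-P) * a * (1-P))) := by
            rw [← ha]
        _ = δ (P * a * P) + δ (P * a * (1-P)) + (δ ((1-P) * a * P) + δ ((1-P) * a * (1-P))) := by
            rw [hadd, hadd, hadd]
        _ = δ (P * a * P) + δ ((1-P) * a * (1-P)) := by
            rw [(offdiag P hP a).1, (offdiag P hP a).2, add_zero, zero_add]
    -- P absorbs δ (P*a*P) on both sides
    have habsL : P • δ (P * a * P) = δ (P * a * P) := by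
      have h := (corner (1-P) hQ a).1
      rw [hQ'] at h
      have : (1 - P) • δ (P * a * P) = 0 := h
      rw [sub_smul, one_smul, sub_eq_zero] at this
      exact this.symm
    have habsR : op P • δ (P * a * P) = δ (P * a * P) := by
      have h := (corner (1-P) hQ a).2
      rw [hQ'] at h
      have hop : op (1 - P) = 1 - op P := by simp
      rw [hop, sub_smul, one_smul, sub_eq_zero] at h
      exact h.symm
    constructor
    · have hPa : P * a = P * a * P + P * a * (1-P) := by noncomm_ring
      calc δ (P * a) = δ (P * a * P) + δ (P * a * (1-P)) := by
            conv_lhs => rw [hPa]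
            rw [hadd]
        _ = δ (P * a * P) := by rw [(offdiag P hP a).1, add_zero]
        _ = P • δ (P * a * P) + P • δ ((1-P) * a * (1-P)) := by
            rw [habsL, (corner P hP a).1, add_zero]
        _ = P • δ a := by rw [hsplit, smul_add]
    · have haP : a * P = P * a * P + (1-P) * a * P := by noncomm_ring
      calc δ (a * P) = δ (P * a * P) + δ ((1-P) * a * P) := by
            conv_lhs => rw [haP]
            rw [hadd]
        _ = δ (P * a * P) := by rw [(offdiag P hP a).2, add_zero]
        _ = op P • δ (P * a * P) + op P • δ ((1-P) * a * (1-P)) := by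
            rw [habsR, (corner P hP a).2, add_zero]
        _ = op P • δ a := by rw [hsplit, smul_add]
  -- Step V : extend to the subring generated by idempotents
  have main : ∀ S : A, S ∈ Subring.closure {P : A | P * P = P} →
      (∀ a : A, δ (S * a) = S • δ a) ∧ (∀ a : A, δ (a * S) = op S • δ a) := by
    intro S hS
    induction hS using Subring.closure_induction with
    | mem x hx => exact ⟨fun a => (key x hx a).1, fun a => (key x hx a).2⟩
    | zero => exact ⟨fun a => by rw [zero_mul, hδ0, zero_smul],
        fun a => by rw [mul_zero, hδ0, op_zero, zero_smul]⟩
    | one => exact ⟨fun a => by rw [one_mul, one_smul],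
        fun a => by rw [mul_one, op_one, one_smul]⟩
    | add x y hx hy ihx ihy =>
        exact ⟨fun a => by rw [add_mul, hadd, ihx.1, ihy.1, add_smul],
          fun a => by rw [mul_add, hadd, ihx.2, ihy.2, op_add, add_smul]⟩
    | neg x hx ihx =>
        exact ⟨fun a => by rw [neg_mul, hneg, ihx.1, neg_smul],
          fun a => by rw [mul_neg, hneg, ihx.2, op_neg, neg_smul]⟩
    | mul x y hx hy ihx ihy =>
        exact ⟨fun a => by rw [mul_assoc, ihx.1, ihy.1, mul_smul],
          fun a => by rw [← mul_assoc, ihy.2, ihx.2, op_mul, mul_smul]⟩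
  -- Step VI : conclude via the ideal and separation
  intro a
  apply hsep
  intro S hS
  have hSc : S ∈ Subring.closure {P : A | P * P = P} := hJsub hS
  have hSa : S * a ∈ J := J.mul_mem_right S a hS
  have hSac : S * a ∈ Subring.closure {P : A | P * P = P} := hJsub hSa
  have h1 := (main S hSc).1 a
  have h2 := (main (S * a) hSac).1 1
  rw [mul_one, hδ1, smul_zero] at h2
  rw [← h1, h2]
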